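/- Let a_i for i \in \mathbb{Z} be pairwise distinct elements of a field, and define A(n,k) as the connection coefficients in z^n = \sum_{k=0}^{n} A(n,k) \prod_{i=1}^{n} (z - a_{i-k})/(a_{n-k+1} - a_{i-k}). Then for 0 \le k \le n, A(n,k) = \sum_{j=0}^{k} \left( \prod_{i=0, i\neq k-j}^{n} (a_{n-k+1} - a_{i-k})/(a_{-j} - a_{i-k}) \right) a_{-j}^n. -/

import Mathlib

open Polynomial Finset

namespace Stmt10Aux

variable {F : Type*} [Field F]

noncomputable def Atil (a : ℤ → F) (n k : ℕ) : F :=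
  ∑ j ∈ Finset.range (k+1),
    (∏ i ∈ (Finset.range (n+1)).erase (k - j),
        (a ((n : ℤ) - k + 1) - a ((i : ℤ) - k)) /
          (a (-(j : ℤ)) - a ((i : ℤ) - k))) * a (-(j : ℤ)) ^ n

noncomputable def Np (a : ℤ → F) (n k : ℕ) : F :=
  ∏ i ∈ Finset.Icc 1 n, (a ((n:ℤ) - k + 1) - a ((i:ℤ) - k))

noncomputable def pp (a : ℤ → F) (n k : ℕ) : F[X] :=
  ∏ i ∈ Finset.Icc 1 n, (X - C (a ((i:ℤ) - k)))

noncomputable def Gh (a : ℤ → F) (n k : ℕ) : F[X] :=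
  Lagrange.interpolate (Finset.range (n+1)) (fun i : ℕ => a ((i:ℤ) - k))
    (fun m : ℕ => if m ≤ k then a ((m:ℤ) - k)^n else 0)

section

variable {a : ℤ → F} (hdist : ∀ i j : ℤ, i ≠ j → a i ≠ a j) {n : ℕ}

include hdist

lemma injOn_comp {w : ℕ → ℤ} (hw : Function.Injective w) :
    Set.InjOn (fun i : ℕ => a (w i)) ↑(Finset.range (n+1)) := by
  intro i _ j _ h
  by_contra hne
  exact hdist _ _ (fun he => hne (hw he)) h

omit hdist in
lemma eval_interpolate {ι : Type*} [DecidableEq ι] (s : Finset ι) (v : ι → F) (r : ι → F)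
    (x : F) :
    (Lagrange.interpolate s v r).eval x =
      ∑ i ∈ s, r i * ∏ j ∈ s.erase i, (x - v j) / (v i - v j) := by
  rw [Lagrange.interpolate_apply, eval_finset_sum]
  refine Finset.sum_congr rfl fun i _ => ?_
  rw [eval_mul, eval_C, Lagrange.basis, eval_prod]
  congr 1
  refine Finset.prod_congr rfl fun j _ => ?_
  rw [Lagrange.basisDivisor, eval_mul, eval_C, eval_sub, eval_X, eval_C,
    div_eq_mul_inv, mul_comm]

lemma degree_Gh_lt (k : ℕ) : (Gh a n k).degree < ((n+1 : ℕ) : WithBot ℕ) := by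
  have := Lagrange.degree_interpolate_lt (s := Finset.range (n+1))
    (r := fun m : ℕ => if m ≤ k then a ((m:ℤ) - k)^n else 0)
    (injOn_comp hdist (w := fun i : ℕ => (i:ℤ) - k) (fun i j h => by simpa using h))
  simpa [Gh] using this

omit hdist in
lemma degree_pp (k : ℕ) : (pp a n k).degree = (n : WithBot ℕ) := by
  have := Lagrange.degree_nodal (s := Finset.Icc 1 n) (v := fun i : ℕ => a ((i:ℤ) - k)) (R := F)
  simpa [pp, Lagrange.nodal] using this

omit hdist in
lemma degree_Cpp_lt (k : ℕ) (c : F) :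
    (C c * pp a n k).degree < ((n+1 : ℕ) : WithBot ℕ) := by
  refine lt_of_le_of_lt (degree_mul_le _ _) ?_
  have h1 : (C c).degree ≤ 0 := degree_C_le
  have h2 := degree_pp (a := a) (n := n) k
  calc (C c).degree + (pp a n k).degree ≤ 0 + (n : WithBot ℕ) := by
        rw [h2]; exact add_le_add h1 le_rfl
    _ = (n : WithBot ℕ) := by rw [zero_add]
    _ < ((n+1 : ℕ) : WithBot ℕ) := by exact_mod_cast Nat.lt_succ_self n

omit hdist in
lemma pp_eval_root {k i : ℕ} (hi : i ∈ Finset.Icc 1 n) :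
    (pp a n k).eval (a ((i:ℤ) - k)) = 0 := by
  rw [pp, eval_prod]
  exact Finset.prod_eq_zero hi (by simp)

omit hdist in
lemma pp_eval_Np (k : ℕ) : (pp a n k).eval (a ((n:ℤ) - k + 1)) = Np a n k := by
  rw [pp, eval_prod, Np]
  simp

lemma Np_ne_zero {k : ℕ} (hk : k ≤ n) : Np a n k ≠ 0 := by
  rw [Np]
  refine Finset.prod_ne_zero_iff.mpr fun i hi => ?_
  simp only [Finset.mem_Icc] at hi
  exact sub_ne_zero.mpr (hdist _ _ (by omega))

lemma pp_eval_self_ne_zero {k : ℕ} : (pp a n k).eval (a (-(k:ℤ))) ≠ 0 := by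
  rw [pp, eval_prod]
  refine Finset.prod_ne_zero_iff.mpr fun i hi => ?_
  simp only [Finset.mem_Icc] at hi
  simp only [eval_sub, eval_X, eval_C]
  exact sub_ne_zero.mpr (hdist _ _ (by omega))

omit hdist in
lemma eval_Gh_special {k : ℕ} (hk : k ≤ n) :
    (Gh a n k).eval (a ((n:ℤ) - k + 1)) = Atil a n k := by
  rw [Gh, eval_interpolate, Atil]
  have h1 : ∑ m ∈ Finset.range (n+1),
      (if m ≤ k then a ((m:ℤ) - k)^n else 0) *
        ∏ i ∈ (Finset.range (n+1)).erase m,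
          (a ((n:ℤ) - k + 1) - a ((i:ℤ) - k)) / (a ((m:ℤ) - k) - a ((i:ℤ) - k))
      = ∑ m ∈ Finset.range (k+1),
        a ((m:ℤ) - k)^n *
          ∏ i ∈ (Finset.range (n+1)).erase m,
            (a ((n:ℤ) - k + 1) - a ((i:ℤ) - k)) / (a ((m:ℤ) - k) - a ((i:ℤ) - k)) := by
    rw [← Finset.sum_subset (Finset.range_subset_range.mpr (by omega : k + 1 ≤ n + 1))
      (fun x _ hx => by
        simp only [Finset.mem_range] at hx
        rw [if_neg (by omega), zero_mul])]
    refine Finset.sum_congr rfl fun m hm => ?_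
    simp only [Finset.mem_range] at hm
    rw [if_pos (by omega)]
  rw [h1, ← Finset.sum_range_reflect]
  refine Finset.sum_congr rfl fun j hj => ?_
  simp only [Finset.mem_range] at hj
  have hred : k + 1 - 1 - j = k - j := by omega
  have hc : ((k - j : ℕ) : ℤ) - k = -(j:ℤ) := by omega
  rw [hred, hc, mul_comm]

lemma Gh_zero : Gh a n 0 = C (Atil a n 0 / Np a n 0) * pp a n 0 := by
  refine Polynomial.eq_of_degrees_lt_of_eval_index_eq (s := Finset.range (n+1))
    (v := fun i : ℕ => a ((i:ℤ) + 1))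
    (injOn_comp hdist (fun i j h => by simpa using h))
    (by simpa using degree_Gh_lt hdist 0)
    (by simpa using degree_Cpp_lt (a := a) (n := n) 0 _) ?_
  intro i hi
  simp only [Finset.mem_range] at hi
  rcases Nat.lt_or_ge i n with hilt | hige
  · -- i + 1 ≤ n : node case, both sides zero
    have hpt : ((i+1:ℕ):ℤ) - (0:ℕ) = (i:ℤ) + 1 := by push_cast; ring
    have hL := Lagrange.eval_interpolate_at_node (s := Finset.range (n+1))
      (v := fun m : ℕ => a ((m:ℤ) - (0:ℕ)))
      (r := fun m : ℕ => if m ≤ 0 then a ((m:ℤ) - (0:ℕ))^n else 0)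
      (injOn_comp hdist (fun i j h => by simpa using h))
      (Finset.mem_range.mpr (by omega : i + 1 < n + 1))
    simp only [hpt] at hL
    have hR : (pp a n 0).eval (a ((i:ℤ) + 1)) = 0 := by
      have := pp_eval_root (a := a) (n := n) (k := 0) (i := i+1)
        (Finset.mem_Icc.mpr ⟨by omega, by omega⟩)
      simpa [hpt] using this
    rw [show (Gh a n 0) = Lagrange.interpolate (Finset.range (n+1))
        (fun m : ℕ => a ((m:ℤ) - (0:ℕ)))
        (fun m : ℕ => if m ≤ 0 then a ((m:ℤ) - (0:ℕ))^n else 0) from rfl]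
    rw [hL, eval_mul, hR, mul_zero, if_neg (by omega)]
  · -- i = n
    have hieq : i = n := by omega
    rw [hieq]
    have hpt : (n:ℤ) + 1 = (n:ℤ) - ((0:ℕ):ℤ) + 1 := by push_cast; ring
    rw [hpt, eval_Gh_special (Nat.zero_le n), eval_mul, eval_C, pp_eval_Np,
      div_mul_cancel₀ _ (Np_ne_zero hdist (Nat.zero_le n))]

lemma Gh_succ (l : ℕ) (hl : l + 1 ≤ n) :
    Gh a n (l+1) = Gh a n l + C (Atil a n (l+1) / Np a n (l+1)) * pp a n (l+1) := by
  refine Polynomial.eq_of_degrees_lt_of_eval_index_eq (s := Finset.range (n+1))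
    (v := fun i : ℕ => a ((i:ℤ) - l))
    (injOn_comp hdist (fun i j h => by simpa using h))
    (by simpa using degree_Gh_lt hdist (l+1)) ?_ ?_
  · refine lt_of_le_of_lt (degree_add_le _ _) (max_lt ?_ ?_)
    · simpa using degree_Gh_lt hdist l
    · simpa using degree_Cpp_lt (a := a) (n := n) (l+1) _
  intro i hi
  simp only [Finset.mem_range] at hi
  rcases Nat.lt_or_ge i n with hilt | hige
  · -- x = a (i - l) = node (i+1) of Gh (l+1) and node i of Gh l
    have hpt : ((i+1:ℕ):ℤ) - ((l+1:ℕ):ℤ) = (i:ℤ) - l := by push_cast; ring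
    have hL := Lagrange.eval_interpolate_at_node (s := Finset.range (n+1))
      (v := fun m : ℕ => a ((m:ℤ) - ((l+1:ℕ):ℤ)))
      (r := fun m : ℕ => if m ≤ l+1 then a ((m:ℤ) - ((l+1:ℕ):ℤ))^n else 0)
      (injOn_comp hdist (fun i j h => by simpa using h))
      (Finset.mem_range.mpr (by omega : i + 1 < n + 1))
    simp only [hpt] at hL
    have hG1 : (Gh a n (l+1)).eval (a ((i:ℤ) - l)) =
        if i + 1 ≤ l + 1 then a ((i:ℤ) - l)^n else 0 := by
      rw [show (Gh a n (l+1)) = Lagrange.interpolate (Finset.range (n+1))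
          (fun m : ℕ => a ((m:ℤ) - ((l+1:ℕ):ℤ)))
          (fun m : ℕ => if m ≤ l+1 then a ((m:ℤ) - ((l+1:ℕ):ℤ))^n else 0) from by
        simp [Gh]]
      exact hL
    have hG2 : (Gh a n l).eval (a ((i:ℤ) - l)) =
        if i ≤ l then a ((i:ℤ) - l)^n else 0 := by
      exact Lagrange.eval_interpolate_at_node (s := Finset.range (n+1))
        (v := fun m : ℕ => a ((m:ℤ) - (l:ℤ)))
        (r := fun m : ℕ => if m ≤ l then a ((m:ℤ) - (l:ℤ))^n else 0)
        (injOn_comp hdist (fun i j h => by simpa using h))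
        (Finset.mem_range.mpr (by omega : i < n + 1))
    have hR : (pp a n (l+1)).eval (a ((i:ℤ) - l)) = 0 := by
      have := pp_eval_root (a := a) (n := n) (k := l+1) (i := i+1)
        (Finset.mem_Icc.mpr ⟨by omega, by omega⟩)
      simpa [hpt] using this
    rw [hG1, eval_add, hG2, eval_mul, hR, mul_zero, add_zero]
    by_cases hc : i ≤ l
    · rw [if_pos (by omega), if_pos hc]
    · rw [if_neg (by omega), if_neg hc]
  · -- i = n : x = a (n - l) = a (n - (l+1) + 1)
    have hieq : i = n := by omega
    rw [hieq]
    have hpt : (n:ℤ) - l = (n:ℤ) - ((l+1:ℕ):ℤ) + 1 := by push_cast; ring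
    have hG2 : (Gh a n l).eval (a ((n:ℤ) - l)) = 0 := by
      have := Lagrange.eval_interpolate_at_node (s := Finset.range (n+1))
        (v := fun m : ℕ => a ((m:ℤ) - (l:ℤ)))
        (r := fun m : ℕ => if m ≤ l then a ((m:ℤ) - (l:ℤ))^n else 0)
        (injOn_comp hdist (fun i j h => by simpa using h))
        (Finset.mem_range.mpr (by omega : n < n + 1))
      rw [if_neg (show ¬ (n ≤ l) by omega)] at this
      exact this
    rw [hpt, eval_Gh_special hl, eval_add, eval_mul, eval_C, pp_eval_Np,
      div_mul_cancel₀ _ (Np_ne_zero hdist hl), ← hpt, hG2, zero_add]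

lemma Gh_eq_sum (l : ℕ) (hl : l ≤ n) :
    Gh a n l = ∑ k ∈ Finset.range (l+1), C (Atil a n k / Np a n k) * pp a n k := by
  induction l with
  | zero => simpa using Gh_zero hdist
  | succ m ih =>
      rw [Finset.sum_range_succ, ← ih (by omega), Gh_succ hdist m hl]

lemma crux : (X : F[X])^n =
    ∑ k ∈ Finset.range (n+1), C (Atil a n k / Np a n k) * pp a n k := by
  rw [← Gh_eq_sum hdist n le_rfl]
  refine (Polynomial.eq_of_degrees_lt_of_eval_index_eq (s := Finset.range (n+1))
    (v := fun i : ℕ => a ((i:ℤ) - n))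
    (injOn_comp hdist (fun i j h => by simpa using h))
    ?_ (by simpa using degree_Gh_lt hdist n) ?_)
  · rw [Finset.card_range, degree_X_pow]
    exact_mod_cast Nat.lt_succ_self n
  intro i hi
  simp only [Finset.mem_range] at hi
  have := Lagrange.eval_interpolate_at_node (s := Finset.range (n+1))
    (v := fun m : ℕ => a ((m:ℤ) - (n:ℤ)))
    (r := fun m : ℕ => if m ≤ n then a ((m:ℤ) - (n:ℤ))^n else 0)
    (injOn_comp hdist (fun i j h => by simpa using h))
    (Finset.mem_range.mpr hi)
  simp only [show i ≤ n by omega, if_true] at this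
  simpa [Gh] using this.symm

end

end Stmt10Aux

theorem stmt10 {F : Type*} [Field F] (a : ℤ → F)
    (hdist : ∀ i j : ℤ, i ≠ j → a i ≠ a j)
    (n : ℕ) (A : ℕ → F)
    (hcon : (Polynomial.X : Polynomial F) ^ n =
      ∑ k ∈ Finset.range (n+1),
        Polynomial.C (A k / ∏ i ∈ Finset.Icc 1 n,
            (a ((n : ℤ) - k + 1) - a ((i : ℤ) - k))) *
          ∏ i ∈ Finset.Icc 1 n,
            (Polynomial.X - Polynomial.C (a ((i : ℤ) - k)))) :
    ∀ k : ℕ, k ≤ n →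
      A k = ∑ j ∈ Finset.range (k+1),
        (∏ i ∈ (Finset.range (n+1)).erase (k - j),
            (a ((n : ℤ) - k + 1) - a ((i : ℤ) - k)) /
              (a (-(j : ℤ)) - a ((i : ℤ) - k))) * a (-(j : ℤ)) ^ n := by
  intro k hk
  classical
  open Stmt10Aux Polynomial Finset in
  have hEq : ∑ k ∈ Finset.range (n+1), C (A k / Np a n k) * pp a n k
      = ∑ k ∈ Finset.range (n+1), C (Atil a n k / Np a n k) * pp a n k := by
    rw [← Stmt10Aux.crux hdist]
    exact hcon.symm
  have key : ∀ m, m ≤ n → A m / Stmt10Aux.Np a n m = Stmt10Aux.Atil a n m / Stmt10Aux.Np a n m := by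
    intro m
    induction m using Nat.strong_induction_on with
    | _ m ih =>
      intro hm
      have hev := congrArg (Polynomial.eval (a (-(m:ℤ)))) hEq
      simp only [Polynomial.eval_finset_sum, Polynomial.eval_mul, Polynomial.eval_C] at hev
      have hmem : m ∈ Finset.range (n+1) := Finset.mem_range.mpr (by omega)
      rw [← Finset.add_sum_erase _ _ hmem, ← Finset.add_sum_erase _ _ hmem] at hev
      have hrest : ∑ x ∈ (Finset.range (n+1)).erase m,
            A x / Stmt10Aux.Np a n x * (Stmt10Aux.pp a n x).eval (a (-(m:ℤ)))
          = ∑ x ∈ (Finset.range (n+1)).erase m,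
            Stmt10Aux.Atil a n x / Stmt10Aux.Np a n x * (Stmt10Aux.pp a n x).eval (a (-(m:ℤ))) := by
        refine Finset.sum_congr rfl fun x hx => ?_
        simp only [Finset.mem_erase, Finset.mem_range] at hx
        rcases Nat.lt_or_ge x m with hxm | hxm
        · rw [ih x hxm (by omega)]
        · have hx2 : m < x := by omega
          have hroot : (Stmt10Aux.pp a n x).eval (a (-(m:ℤ))) = 0 := by
            have := Stmt10Aux.pp_eval_root (a := a) (n := n) (k := x) (i := x - m)
              (Finset.mem_Icc.mpr ⟨by omega, by omega⟩)
            have hc : ((x - m : ℕ) : ℤ) - x = -(m:ℤ) := by omega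
            rwa [hc] at this
          rw [hroot, mul_zero, mul_zero]
      rw [hrest] at hev
      have hcan := add_right_cancel hev
      exact mul_right_cancel₀ (Stmt10Aux.pp_eval_self_ne_zero hdist) hcan
  have hAk : A k = Stmt10Aux.Atil a n k := by
    have h := key k hk
    have hnz := Stmt10Aux.Np_ne_zero hdist hk
    field_simp at h
    exact h
  exact hAk
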